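/- For every finite DAG G, a valid pebbling in the partial-computing red-blue pebble game exists with fast-memory capacity r = 2: processing nodes in a topological order and marking the in-edges of each node one by one, loading inputs and saving outputs as needed, yields a valid PRBP pebbling. -/

import Mathlib

open scoped Classical

/-! ### Directed graphs / DAGs -/

structure DirGraph (V : Type) where
  E : V → V → Prop

namespace DirGraph

variable {V : Type}

def Acyclic (G : DirGraph V) : Prop := ∀ v, ¬ Relation.TransGen G.E v v

def IsSource (G : DirGraph V) (v : V) : Prop := ∀ u, ¬ G.E u v

def IsSink (G : DirGraph V) (v : V) : Prop := ∀ u, ¬ G.E v u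

def NoIsolated (G : DirGraph V) : Prop := ∀ v, (∃ u, G.E u v) ∨ (∃ u, G.E v u)

noncomputable def inDeg (G : DirGraph V) (v : V) : ℕ := {u | G.E u v}.ncard

noncomputable def outDeg (G : DirGraph V) (v : V) : ℕ := {u | G.E v u}.ncard

noncomputable def maxInDeg (G : DirGraph V) [Fintype V] : ℕ :=
  Finset.univ.sup G.inDeg

noncomputable def maxOutDeg (G : DirGraph V) [Fintype V] : ℕ :=
  Finset.univ.sup G.outDeg

end DirGraph

/-! ### The (one-shot) red-blue pebble game (RBP) -/

structure RBPState (V : Type) where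
  red : Finset V
  blue : Finset V
  computed : Finset V

inductive RBPMove (V : Type) where
  | save : V → RBPMove V
  | load : V → RBPMove V
  | compute : V → RBPMove V
  | delete : V → RBPMove V

def RBPMove.ioCost {V : Type} : RBPMove V → ℕ
  | .save _ => 1
  | .load _ => 1
  | _ => 0

variable {V : Type} [Fintype V] [DecidableEq V]

def RBPStep (G : DirGraph V) (r : ℕ) (s : RBPState V) :
    RBPMove V → RBPState V → Prop
  | .save v, t => v ∈ s.red ∧ t = { s with blue := insert v s.blue }
  | .load v, t => v ∈ s.blue ∧ (insert v s.red).card ≤ r ∧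
      t = { s with red := insert v s.red }
  | .compute v, t => ¬ G.IsSource v ∧ v ∉ s.computed ∧
      (∀ u, G.E u v → u ∈ s.red) ∧ (insert v s.red).card ≤ r ∧
      t = { s with red := insert v s.red, computed := insert v s.computed }
  | .delete v, t => v ∈ s.red ∧ t = { s with red := s.red.erase v }

inductive RBPReaches (G : DirGraph V) (r : ℕ) :
    RBPState V → List (RBPMove V) → RBPState V → Prop
  | nil (s : RBPState V) : RBPReaches G r s [] s
  | cons {s t u : RBPState V} {m : RBPMove V} {L : List (RBPMove V)} :
      RBPStep G r s m t → RBPReaches G r t L u → RBPReaches G r s (m :: L) u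

noncomputable def RBPInit (G : DirGraph V) : RBPState V :=
  ⟨∅, Finset.univ.filter (fun v => G.IsSource v), ∅⟩

def RBPValid (G : DirGraph V) (r : ℕ) (L : List (RBPMove V)) : Prop :=
  ∃ t, RBPReaches G r (RBPInit G) L t ∧ ∀ v, G.IsSink v → v ∈ t.blue

def RBPCost {V : Type} (L : List (RBPMove V)) : ℕ := (L.map RBPMove.ioCost).sum

noncomputable def optRBP (G : DirGraph V) (r : ℕ) : ℕ∞ :=
  sInf ((fun L => (RBPCost L : ℕ∞)) '' {L | RBPValid G r L})

/-! ### The partial-computing red-blue pebble game (PRBP) -/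

structure PRBPState (V : Type) where
  lred : Finset V
  dred : Finset V
  blue : Finset V
  marked : Finset (V × V)

def PRBPState.red (s : PRBPState V) : Finset V := s.lred ∪ s.dred

inductive PRBPMove (V : Type) where
  | save : V → PRBPMove V
  | load : V → PRBPMove V
  | pcompute : V → V → PRBPMove V
  | delete : V → PRBPMove V

def PRBPMove.ioCost {V : Type} : PRBPMove V → ℕ
  | .save _ => 1
  | .load _ => 1
  | _ => 0

def PRBPStep (G : DirGraph V) (r : ℕ) (s : PRBPState V) :
    PRBPMove V → PRBPState V → Prop
  | .save v, t => v ∈ s.dred ∧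
      t = { s with lred := insert v s.lred, dred := s.dred.erase v,
                   blue := insert v s.blue }
  | .load v, t => v ∈ s.blue ∧ ((insert v s.lred) ∪ s.dred).card ≤ r ∧
      t = { s with lred := insert v s.lred }
  | .pcompute u v, t => G.E u v ∧ (u, v) ∉ s.marked ∧
      (∀ w, G.E w u → (w, u) ∈ s.marked) ∧ u ∈ s.red ∧
      (v ∈ s.red ∨ (v ∉ s.red ∧ v ∉ s.blue)) ∧
      ((s.lred.erase v) ∪ (insert v s.dred)).card ≤ r ∧
      t = { s with lred := s.lred.erase v, dred := insert v s.dred,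
                   blue := s.blue.erase v, marked := insert (u, v) s.marked }
  | .delete v, t =>
      (v ∈ s.lred ∧ t = { s with lred := s.lred.erase v }) ∨
      (v ∈ s.dred ∧ (∀ w, G.E v w → (v, w) ∈ s.marked) ∧
        t = { s with dred := s.dred.erase v })

inductive PRBPReaches (G : DirGraph V) (r : ℕ) :
    PRBPState V → List (PRBPMove V) → PRBPState V → Prop
  | nil (s : PRBPState V) : PRBPReaches G r s [] s
  | cons {s t u : PRBPState V} {m : PRBPMove V} {L : List (PRBPMove V)} :
      PRBPStep G r s m t → PRBPReaches G r t L u → PRBPReaches G r s (m :: L) u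

noncomputable def PRBPInit (G : DirGraph V) : PRBPState V :=
  ⟨∅, ∅, Finset.univ.filter (fun v => G.IsSource v), ∅⟩

def PRBPValid (G : DirGraph V) (r : ℕ) (L : List (PRBPMove V)) : Prop :=
  ∃ t, PRBPReaches G r (PRBPInit G) L t ∧ (∀ v, G.IsSink v → v ∈ t.blue) ∧
    ∀ u v, G.E u v → (u, v) ∈ t.marked

def PRBPCost {V : Type} (L : List (PRBPMove V)) : ℕ := (L.map PRBPMove.ioCost).sum

noncomputable def optPRBP (G : DirGraph V) (r : ℕ) : ℕ∞ :=
  sInf ((fun L => (PRBPCost L : ℕ∞)) '' {L | PRBPValid G r L})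

/-- `s` is a state reached by some prefix of the pebbling `L`. -/
def PRBPPrefixState (G : DirGraph V) (r : ℕ) (L : List (PRBPMove V))
    (s : PRBPState V) : Prop :=
  ∃ L₁ L₂, L = L₁ ++ L₂ ∧ PRBPReaches G r (PRBPInit G) L₁ s

/-! ### Paths, dominators, S-partitions -/

/-- A directed path in `G` starting at a source node. -/
def IsSourcePath (G : DirGraph V) (p : List V) : Prop :=
  p ≠ [] ∧ p.Chain' G.E ∧ ∀ h : p ≠ [], G.IsSource (p.head h)

/-- `D` is a dominator for the node set `V₀`. -/
def Dominates (G : DirGraph V) (D : Set V) (V₀ : Set V) : Prop :=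
  ∀ p : List V, IsSourcePath G p → ∀ h : p ≠ [], p.getLast h ∈ V₀ →
    ∃ d ∈ D, d ∈ p

/-- The path `p` contains an edge of `E₀` (two consecutive nodes forming it). -/
def PathContainsEdge (p : List V) (E₀ : Set (V × V)) : Prop :=
  ∃ u v, (u, v) ∈ E₀ ∧ [u, v] <:+: p

/-- `D` is an edge-dominator for the edge set `E₀`. -/
def EdgeDominates (G : DirGraph V) (D : Set V) (E₀ : Set (V × V)) : Prop :=
  ∀ p : List V, IsSourcePath G p → PathContainsEdge p E₀ → ∃ d ∈ D, d ∈ p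

/-- The terminal set of a node set `V₀`: nodes of `V₀` with no out-neighbor in `V₀`. -/
def terminalSet (G : DirGraph V) (V₀ : Set V) : Set V :=
  {v | v ∈ V₀ ∧ ∀ w, G.E v w → w ∉ V₀}

/-- The edge-terminal set of an edge set `E₀`. -/
def edgeTerminalSet (E₀ : Set (V × V)) : Set V :=
  {v | (∃ u, (u, v) ∈ E₀) ∧ ∀ w, (v, w) ∉ E₀}

/-- An `S`-partition of the DAG `G` (Hong–Kung). -/
def IsSPartition (G : DirGraph V) (S : ℕ) (k : ℕ) (P : Fin k → Set V) : Prop :=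
  (∀ v : V, ∃! i, v ∈ P i) ∧
  (∀ i j : Fin k, j < i → ∀ u v, u ∈ P i → v ∈ P j → ¬ G.E u v) ∧
  (∀ i, ∃ D : Set V, D.ncard ≤ S ∧ Dominates G D (P i)) ∧
  (∀ i, (terminalSet G (P i)).ncard ≤ S)

/-- An `S`-dominator partition of the DAG `G`: an `S`-partition without the
terminal-set condition. -/
def IsSDomPartition (G : DirGraph V) (S : ℕ) (k : ℕ) (P : Fin k → Set V) : Prop :=
  (∀ v : V, ∃! i, v ∈ P i) ∧
  (∀ i j : Fin k, j < i → ∀ u v, u ∈ P i → v ∈ P j → ¬ G.E u v) ∧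
  (∀ i, ∃ D : Set V, D.ncard ≤ S ∧ Dominates G D (P i))

/-- An `S`-edge partition of the DAG `G`. -/
def IsSEdgePartition (G : DirGraph V) (S : ℕ) (k : ℕ)
    (P : Fin k → Set (V × V)) : Prop :=
  (∀ i, P i ⊆ {e | G.E e.1 e.2}) ∧
  (∀ u v, G.E u v → ∃! i, (u, v) ∈ P i) ∧
  (∀ i j : Fin k, i < j → ∀ u v w, G.E u v → G.E v w →
      ¬ ((v, w) ∈ P i ∧ (u, v) ∈ P j)) ∧
  (∀ i, ∃ D : Set V, D.ncard ≤ S ∧ EdgeDominates G D (P i)) ∧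
  (∀ i, (edgeTerminalSet (P i)).ncard ≤ S)

noncomputable def minEdgePartition (G : DirGraph V) (S : ℕ) : ℕ :=
  sInf {k | ∃ P : Fin k → Set (V × V), IsSEdgePartition G S k P}

noncomputable def minDomPartition (G : DirGraph V) (S : ℕ) : ℕ :=
  sInf {k | ∃ P : Fin k → Set V, IsSDomPartition G S k P}

noncomputable def minSPartition (G : DirGraph V) (S : ℕ) : ℕ :=
  sInf {k | ∃ P : Fin k → Set V, IsSPartition G S k P}
section PRBPAux

variable {V : Type} [Fintype V] [DecidableEq V]

private lemma prbp_reaches_append {G : DirGraph V} {r : ℕ}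
    {s t u : PRBPState V} {L1 L2 : List (PRBPMove V)}
    (h1 : PRBPReaches G r s L1 t) (h2 : PRBPReaches G r t L2 u) :
    PRBPReaches G r s (L1 ++ L2) u := by
  induction h1 with
  | nil => simpa
  | cons hstep _ ih => exact PRBPReaches.cons hstep (ih h2)

private lemma prbpstate_ext {a b : PRBPState V} (h1 : a.lred = b.lred)
    (h2 : a.dred = b.dred) (h3 : a.blue = b.blue) (h4 : a.marked = b.marked) :
    a = b := by
  cases a; cases b; simp_all

/-- The target marked set: all edges into `S`. -/
noncomputable def prbpMk (G : DirGraph V) (S : Finset V) : Finset (V × V) :=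
  Finset.univ.filter (fun e => G.E e.1 e.2 ∧ e.2 ∈ S)

/-- The canonical state after processing node set `S`. -/
noncomputable def prbpSt (G : DirGraph V) (S : Finset V) : PRBPState V :=
  ⟨∅, ∅, (Finset.univ.filter fun v => G.IsSource v) ∪ S, prbpMk G S⟩

private lemma prbp_inner {G : DirGraph V} (hacyc : G.Acyclic) (v : V) :
    ∀ rest : List V, rest.Nodup → (∀ u ∈ rest, G.E u v) →
    ∀ s : PRBPState V, s.lred = ∅ → s.dred = {v} →
    (∀ u ∈ rest, u ∈ s.blue) → v ∉ s.blue →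
    (∀ u ∈ rest, ∀ w, G.E w u → (w, u) ∈ s.marked) →
    (∀ u ∈ rest, (u, v) ∉ s.marked) →
    ∃ L t, PRBPReaches G 2 s L t ∧ t.lred = ∅ ∧ t.dred = {v} ∧ t.blue = s.blue ∧
      t.marked = s.marked ∪ rest.toFinset.image (fun u => (u, v)) := by
  intro rest
  induction rest with
  | nil =>
      intro _ _ s hl hd _ _ _ _
      exact ⟨[], s, PRBPReaches.nil s, hl, hd, rfl, by simp⟩
  | cons u rest ih =>
      intro hnd hEr s hl hd hblue hvblue hmarkedin hmarkednot
      have hEu : G.E u v := hEr u (by simp)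
      have huv : u ≠ v := by
        intro h; exact hacyc v (Relation.TransGen.single (h ▸ hEu))
      -- step 1 : load u
      set s1 : PRBPState V := { s with lred := insert u s.lred } with hs1
      have hstep1 : PRBPStep G 2 s (.load u) s1 := by
        refine ⟨hblue u (by simp), ?_, rfl⟩
        rw [hl, hd]
        exact le_trans (Finset.card_union_le _ _) (by simp)
      -- step 2 : pcompute u v
      set s2 : PRBPState V :=
        { s1 with lred := s1.lred.erase v, dred := insert v s1.dred,
                  blue := s1.blue.erase v,
                  marked := insert (u, v) s1.marked } with hs2
      have hvred : v ∈ s1.red := by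
        simp [PRBPState.red, hs1, hd]
      have hured : u ∈ s1.red := by
        simp [PRBPState.red, hs1]
      have hcard2 : ((s1.lred.erase v) ∪ (insert v s1.dred)).card ≤ 2 := by
        have : s1.lred.erase v = {u} := by
          rw [hs1]
          simp only [hl, LawfulSingleton.insert_empty_eq]
          exact Finset.erase_eq_of_notMem (by simp [Ne.symm huv])
        rw [this]
        have : insert v s1.dred = {v} := by simp [hs1, hd]
        rw [this]
        exact le_trans (Finset.card_union_le _ _) (by simp)
      have hstep2 : PRBPStep G 2 s1 (.pcompute u v) s2 := by
        refine ⟨hEu, ?_, ?_, hured, Or.inl hvred, hcard2, rfl⟩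
        · exact hmarkednot u (by simp)
        · exact hmarkedin u (by simp)
      -- step 3 : delete u
      set s3 : PRBPState V := { s2 with lred := s2.lred.erase u } with hs3
      have hstep3 : PRBPStep G 2 s2 (.delete u) s3 := by
        refine Or.inl ⟨?_, rfl⟩
        simp [hs2, hs1, hl, huv]
      -- facts about s3
      have hs3l : s3.lred = ∅ := by
        show ((insert u s.lred).erase v).erase u = ∅
        rw [hl, Finset.erase_eq_of_notMem (s := insert u ∅) (by simp [Ne.symm huv])]
        simp
      have hs3d : s3.dred = {v} := by
        show insert v s.dred = {v}
        rw [hd]; simp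
      have hs3b : s3.blue = s.blue := by
        show s.blue.erase v = s.blue
        exact Finset.erase_eq_of_notMem hvblue
      have hs3m : s3.marked = insert (u, v) s.marked := by simp [hs3, hs2, hs1]
      obtain ⟨L', t, hL', ht1, ht2, ht3, ht4⟩ :=
        ih hnd.of_cons (fun u' hu' => hEr u' (List.mem_cons_of_mem _ hu')) s3
          hs3l hs3d
          (fun u' hu' => by rw [hs3b]; exact hblue u' (List.mem_cons_of_mem _ hu'))
          (by rw [hs3b]; exact hvblue)
          (fun u' hu' w hw => by
            rw [hs3m]
            exact Finset.mem_insert_of_mem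
              (hmarkedin u' (List.mem_cons_of_mem _ hu') w hw))
          (fun u' hu' => by
            rw [hs3m]
            simp only [Finset.mem_insert, Prod.mk.injEq, not_or]
            refine ⟨?_, hmarkednot u' (List.mem_cons_of_mem _ hu')⟩
            intro ⟨h1, _⟩
            exact (List.nodup_cons.mp hnd).1 (h1 ▸ hu'))
      refine ⟨.load u :: .pcompute u v :: .delete u :: L', t,
        PRBPReaches.cons hstep1 (PRBPReaches.cons hstep2
          (PRBPReaches.cons hstep3 hL')), ht1, ht2, ?_, ?_⟩
      · rw [ht3, hs3b]
      · rw [ht4, hs3m]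
        ext e
        simp only [Finset.mem_union, Finset.mem_insert, List.toFinset_cons,
          Finset.image_insert, Finset.mem_image]
        tauto

private lemma prbp_block {G : DirGraph V} (hacyc : G.Acyclic) (S : Finset V)
    (v : V) (hv : v ∉ S) (hpred : ∀ u, G.E u v → u ∈ S) :
    ∃ L : List (PRBPMove V), PRBPReaches G 2 (prbpSt G S) L (prbpSt G (insert v S)) := by
  by_cases hsrc : G.IsSource v
  · -- v is a source : no moves needed, states are equal
    refine ⟨[], ?_⟩
    have : prbpSt G S = prbpSt G (insert v S) := by
      refine prbpstate_ext rfl rfl ?_ ?_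
      · simp only [prbpSt]
        ext a
        simp only [Finset.mem_union, Finset.mem_filter, Finset.mem_univ,
          true_and, Finset.mem_insert]
        constructor
        · tauto
        · rintro (h | h | h)
          · exact Or.inl h
          · exact Or.inl (h ▸ hsrc)
          · exact Or.inr h
      · simp only [prbpSt, prbpMk]
        ext e
        simp only [Finset.mem_filter, Finset.mem_univ, true_and,
          Finset.mem_insert]
        constructor
        · tauto
        · rintro ⟨hE, h | h⟩
          · exact absurd hE (h ▸ hsrc e.1)
          · exact ⟨hE, h⟩
    rw [this]; exact PRBPReaches.nil _
  · -- v has at least one in-neighbor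
    set l : List V := (Finset.univ.filter fun u => G.E u v).toList with hldef
    have hlmem : ∀ u, u ∈ l ↔ G.E u v := by
      intro u; simp [hldef]
    have hlnd : l.Nodup := Finset.nodup_toList _
    have hlne : l ≠ [] := by
      simp only [DirGraph.IsSource, not_forall, not_not] at hsrc
      obtain ⟨u, hu⟩ := hsrc
      intro h
      exact absurd ((hlmem u).mpr hu) (by simp [h])
    obtain ⟨u₀, rest, hlcons⟩ := List.exists_cons_of_ne_nil hlne
    have hEu₀ : G.E u₀ v := (hlmem u₀).mp (by simp [hlcons])
    have hu₀v : u₀ ≠ v := by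
      intro h; exact hacyc v (Relation.TransGen.single (h ▸ hEu₀))
    have hvnotsrc : v ∉ Finset.univ.filter (fun w => G.IsSource w) := by
      simp only [Finset.mem_filter, Finset.mem_univ, true_and]
      intro h; exact h u₀ hEu₀
    have hvblue : v ∉ (prbpSt G S).blue := by
      simp only [prbpSt, Finset.mem_union, not_or]
      exact ⟨hvnotsrc, hv⟩
    set s := prbpSt G S with hsdef
    have hsl : s.lred = ∅ := rfl
    have hsd : s.dred = ∅ := rfl
    -- step 1 : load u₀
    set s1 : PRBPState V := { s with lred := insert u₀ s.lred } with hs1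
    have hstep1 : PRBPStep G 2 s (.load u₀) s1 := by
      refine ⟨?_, ?_, rfl⟩
      · simp only [hsdef, prbpSt, Finset.mem_union]
        exact Or.inr (hpred u₀ hEu₀)
      · rw [hsl, hsd]
        simp
    -- step 2 : pcompute u₀ v
    set s2 : PRBPState V :=
      { s1 with lred := s1.lred.erase v, dred := insert v s1.dred,
                blue := s1.blue.erase v,
                marked := insert (u₀, v) s1.marked } with hs2
    have hstep2 : PRBPStep G 2 s1 (.pcompute u₀ v) s2 := by
      refine ⟨hEu₀, ?_, ?_, ?_, ?_, ?_, rfl⟩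
      · simp only [hs1]
        show (u₀, v) ∉ s.marked
        simp [hsdef, prbpSt, prbpMk, hv]
      · intro w hw
        simp only [hs1]
        show (w, u₀) ∈ s.marked
        simp only [hsdef, prbpSt, prbpMk, Finset.mem_filter, Finset.mem_univ,
          true_and]
        exact ⟨hw, hpred u₀ hEu₀⟩
      · simp [PRBPState.red, hs1]
      · refine Or.inr ⟨?_, ?_⟩
        · simp [PRBPState.red, hs1, hsl, hsd, Ne.symm hu₀v]
        · simp only [hs1]
          exact hvblue
      · have h1 : s1.lred.erase v = {u₀} := by
          rw [hs1]
          simp only [hsl, LawfulSingleton.insert_empty_eq]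
          exact Finset.erase_eq_of_notMem (by simp [Ne.symm hu₀v])
        have h2 : insert v s1.dred = {v} := by simp [hs1, hsd]
        rw [h1, h2]
        exact le_trans (Finset.card_union_le _ _) (by simp)
    -- step 3 : delete u₀
    set s3 : PRBPState V := { s2 with lred := s2.lred.erase u₀ } with hs3
    have hstep3 : PRBPStep G 2 s2 (.delete u₀) s3 := by
      refine Or.inl ⟨?_, rfl⟩
      simp [hs2, hs1, hsl, hu₀v]
    have hs3l : s3.lred = ∅ := by
      show ((insert u₀ s.lred).erase v).erase u₀ = ∅
      rw [hsl, Finset.erase_eq_of_notMem (s := insert u₀ ∅) (by simp [Ne.symm hu₀v])]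
      simp
    have hs3d : s3.dred = {v} := by
      show insert v s.dred = {v}
      rw [hsd]; simp
    have hs3b : s3.blue = s.blue := by
      show s.blue.erase v = s.blue
      exact Finset.erase_eq_of_notMem hvblue
    have hs3m : s3.marked = insert (u₀, v) s.marked := by simp [hs3, hs2, hs1]
    -- inner loop over rest
    have hndc := hlcons ▸ hlnd
    obtain ⟨L', t, hL', ht1, ht2, ht3, ht4⟩ :=
      prbp_inner hacyc v rest hndc.of_cons
        (fun u hu => (hlmem u).mp (by rw [hlcons]; exact List.mem_cons_of_mem _ hu))
        s3 hs3l hs3d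
        (fun u hu => by
          rw [hs3b]
          have : G.E u v := (hlmem u).mp (by rw [hlcons]; exact List.mem_cons_of_mem _ hu)
          simp only [hsdef, prbpSt, Finset.mem_union]
          exact Or.inr (hpred u this))
        (by rw [hs3b]; exact hvblue)
        (fun u hu w hw => by
          rw [hs3m]
          have hu' : G.E u v := (hlmem u).mp (by rw [hlcons]; exact List.mem_cons_of_mem _ hu)
          refine Finset.mem_insert_of_mem ?_
          simp only [hsdef, prbpSt, prbpMk, Finset.mem_filter, Finset.mem_univ,
            true_and]
          exact ⟨hw, hpred u hu'⟩)
        (fun u hu => by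
          rw [hs3m]
          simp only [Finset.mem_insert, Prod.mk.injEq, not_or]
          constructor
          · intro ⟨h1, _⟩
            exact (List.nodup_cons.mp hndc).1 (h1 ▸ hu)
          · show (u, v) ∉ s.marked
            simp [hsdef, prbpSt, prbpMk, hv])
    -- step : save v
    set t1 : PRBPState V := { t with lred := insert v t.lred, dred := t.dred.erase v,
                                     blue := insert v t.blue } with ht1'
    have hstepS : PRBPStep G 2 t (.save v) t1 := ⟨by rw [ht2]; simp, rfl⟩
    -- step : delete v
    set t2 : PRBPState V := { t1 with lred := t1.lred.erase v } with ht2'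
    have hstepD : PRBPStep G 2 t1 (.delete v) t2 := Or.inl ⟨by simp [ht1'], rfl⟩
    refine ⟨.load u₀ :: .pcompute u₀ v :: .delete u₀ :: (L' ++ [.save v, .delete v]), ?_⟩
    have hreach : PRBPReaches G 2 s
        (.load u₀ :: .pcompute u₀ v :: .delete u₀ :: (L' ++ [.save v, .delete v])) t2 :=
      PRBPReaches.cons hstep1 (PRBPReaches.cons hstep2 (PRBPReaches.cons hstep3
        (prbp_reaches_append hL' (PRBPReaches.cons hstepS
          (PRBPReaches.cons hstepD (PRBPReaches.nil _))))))
    have hfinal : t2 = prbpSt G (insert v S) := by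
      apply prbpstate_ext
      · show (insert v t.lred).erase v = ∅
        rw [ht1]; simp
      · show t.dred.erase v = ∅
        rw [ht2]; simp
      · show insert v t.blue = _
        rw [ht3, hs3b]
        simp only [hsdef, prbpSt]
        ext a
        simp only [Finset.mem_insert, Finset.mem_union]
        tauto
      · show t.marked = _
        rw [ht4, hs3m]
        ext e
        simp only [Finset.mem_union, Finset.mem_insert, Finset.mem_image,
          List.mem_toFinset, prbpSt, prbpMk, Finset.mem_filter, Finset.mem_univ,
          true_and]
        constructor
        · rintro ((h | h) | ⟨a, ha, rfl⟩)
          · rw [h]; exact ⟨hEu₀, by simp⟩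
          · simp only [hsdef, prbpSt, prbpMk, Finset.mem_filter, Finset.mem_univ,
              true_and] at h
            exact ⟨h.1, by simp [h.2]⟩
          · have : G.E a v := (hlmem a).mp (by rw [hlcons]; exact List.mem_cons_of_mem _ ha)
            exact ⟨this, by simp⟩
        · rintro ⟨hE, hmem⟩
          rcases hmem with h | h
          · -- e.2 = v
            have : e.1 ∈ l := (hlmem e.1).mpr (h ▸ hE)
            rw [hlcons] at this
            rcases List.mem_cons.mp this with h1 | h1
            · left; left
              exact Prod.ext h1 h
            · right
              exact ⟨e.1, h1, Prod.ext rfl h.symm⟩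
          · left; right
            simp only [hsdef, prbpSt, prbpMk, Finset.mem_filter, Finset.mem_univ,
              true_and]
            exact ⟨hE, h⟩
    rw [← hfinal]
    exact hreach

private lemma prbp_exists_next {G : DirGraph V} (hacyc : G.Acyclic)
    {S : Finset V} (hS : S ≠ Finset.univ) :
    ∃ v ∉ S, ∀ u, G.E u v → u ∈ S := by
  haveI : IsTrans V (Relation.TransGen G.E) := ⟨fun _ _ _ => Relation.TransGen.trans⟩
  haveI : IsIrrefl V (Relation.TransGen G.E) := ⟨hacyc⟩
  have hwf : WellFounded (Relation.TransGen G.E) :=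
    Finite.wellFounded_of_trans_of_irrefl _
  have hne : {v : V | v ∉ S}.Nonempty := by
    by_contra h
    apply hS
    ext a
    simp only [Set.not_nonempty_iff_eq_empty, Set.eq_empty_iff_forall_notMem,
      Set.mem_setOf_eq, not_not] at h
    simp [h a]
  obtain ⟨v, hv, hmin⟩ := hwf.has_min _ hne
  refine ⟨v, hv, fun u hu => ?_⟩
  by_contra huS
  exact hmin u huS (Relation.TransGen.single hu)

private lemma prbp_outer {G : DirGraph V} (hacyc : G.Acyclic) :
    ∀ n (S : Finset V), (∀ a b, G.E a b → b ∈ S → a ∈ S) →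
    (Finset.univ \ S).card ≤ n →
    ∃ L : List (PRBPMove V), PRBPReaches G 2 (prbpSt G S) L (prbpSt G Finset.univ) := by
  intro n
  induction n with
  | zero =>
      intro S _ hcard
      have : S = Finset.univ := by
        have := Finset.card_eq_zero.mp (Nat.le_zero.mp hcard)
        have h2 : Finset.univ ⊆ S := by
          intro a _
          by_contra h
          exact absurd (Finset.mem_sdiff.mpr ⟨Finset.mem_univ a, h⟩) (by simp [this])
        exact Finset.eq_univ_of_forall (fun a => h2 (Finset.mem_univ a))
      rw [this]
      exact ⟨[], PRBPReaches.nil _⟩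
  | succ n ih =>
      intro S hdc hcard
      by_cases hS : S = Finset.univ
      · rw [hS]; exact ⟨[], PRBPReaches.nil _⟩
      · obtain ⟨v, hv, hpred⟩ := prbp_exists_next hacyc hS
        obtain ⟨L1, hL1⟩ := prbp_block hacyc S v hv hpred
        have hdc' : ∀ a b, G.E a b → b ∈ insert v S → a ∈ insert v S := by
          intro a b hE hb
          rcases Finset.mem_insert.mp hb with h | h
          · exact Finset.mem_insert_of_mem (hpred a (h ▸ hE))
          · exact Finset.mem_insert_of_mem (hdc a b hE h)
        have hcard' : (Finset.univ \ insert v S).card ≤ n := by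
          have h1 : Finset.univ \ insert v S = (Finset.univ \ S).erase v := by
            ext a
            simp only [Finset.mem_sdiff, Finset.mem_univ, true_and,
              Finset.mem_insert, not_or, Finset.mem_erase]
          have h2 : v ∈ Finset.univ \ S := Finset.mem_sdiff.mpr ⟨Finset.mem_univ v, hv⟩
          rw [h1, Finset.card_erase_of_mem h2]
          omega
        obtain ⟨L2, hL2⟩ := ih (insert v S) hdc' hcard'
        exact ⟨L1 ++ L2, prbp_reaches_append hL1 hL2⟩

end PRBPAux

/-- For every finite DAG, a valid PRBP pebbling exists already with
fast-memory capacity `r = 2`. -/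
theorem prbp_valid_with_two_pebbles {V : Type} [Fintype V] [DecidableEq V]
    (G : DirGraph V) (hacyc : G.Acyclic) :
    ∃ L : List (PRBPMove V), PRBPValid G 2 L := by
  have hinit : PRBPInit G = prbpSt G ∅ := by
    refine prbpstate_ext rfl rfl ?_ ?_
    · simp [PRBPInit, prbpSt]
    · simp only [PRBPInit, prbpSt, prbpMk]
      ext e
      simp
  obtain ⟨L, hL⟩ := prbp_outer hacyc (Fintype.card V) ∅ (by simp)
    (by simp [Finset.card_univ])
  refine ⟨L, prbpSt G Finset.univ, by rw [hinit]; exact hL, ?_, ?_⟩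
  · intro v _
    simp [prbpSt]
  · intro u v hE
    simp [prbpSt, prbpMk, hE]
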